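/- Let g ∈ ℝⁿ be defined by g_i = n^{−a} for i < n^a and g_i = i^{(ω−2)/(1−a) − 1} · n^{−a(ω−2)/(1−a)} for i ≥ n^a, where 2 ≤ ω ≤ 3 and 0 < a < 1. Then (Σ_{i=1}^n g_i²)^{1/2} ≤ C·√(log n)·(n^{−a/2} + n^{ω−5/2}) for a universal constant C. -/
import Mathlib


open Real Finset

/-- The weight sequence used in the projection-maintenance potential:
`g_i = n^{-a}` for `i < n^a` and `g_i = i^{(ω−2)/(1−a)−1} n^{−a(ω−2)/(1−a)}` otherwise. -/
noncomputable def gweight (n : ℕ) (a ω : ℝ) (i : ℕ) : ℝ :=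
  if (i : ℝ) < (n : ℝ) ^ a then (n : ℝ) ^ (-a)
  else (i : ℝ) ^ ((ω - 2) / (1 - a) - 1) * (n : ℝ) ^ (-(a * (ω - 2) / (1 - a)))

private lemma my_sqrt_add_le (x y : ℝ) (hx : 0 ≤ x) (hy : 0 ≤ y) :
    Real.sqrt (x + y) ≤ Real.sqrt x + Real.sqrt y := by
  have h : x + y ≤ (Real.sqrt x + Real.sqrt y) ^ 2 := by
    rw [add_sq, Real.sq_sqrt hx, Real.sq_sqrt hy]
    nlinarith [Real.sqrt_nonneg x, Real.sqrt_nonneg y]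
  calc Real.sqrt (x + y) ≤ Real.sqrt ((Real.sqrt x + Real.sqrt y) ^ 2) := Real.sqrt_le_sqrt h
    _ = Real.sqrt x + Real.sqrt y := Real.sqrt_sq (by positivity)

private lemma my_sqrt_rpow (x e : ℝ) (hx : 0 ≤ x) : Real.sqrt (x ^ e) = x ^ (e / 2) := by
  rw [Real.sqrt_eq_rpow, ← Real.rpow_mul hx]
  congr 1; ring

private lemma gweight_sq_le (n : ℕ) (a ω : ℝ) (hn : 2 ≤ n) (ha0 : 0 < a) (ha1 : a < 1)
    (hω2 : 2 ≤ ω) (hω3 : ω ≤ 3) {i : ℕ} (hi1 : 1 ≤ i) (hin : i ≤ n) :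
    gweight n a ω i ^ 2 ≤ (i : ℝ)⁻¹ * ((n : ℝ) ^ (-a) + (n : ℝ) ^ (2 * ω - 5)) := by
  have hi0 : (0 : ℝ) < i := by exact_mod_cast hi1
  have hn0 : (0 : ℝ) < n := by positivity
  have hA : 0 ≤ (n : ℝ) ^ (-a) := Real.rpow_nonneg hn0.le _
  have hB : 0 ≤ (n : ℝ) ^ (2 * ω - 5) := Real.rpow_nonneg hn0.le _
  set β := (ω - 2) / (1 - a) with hβdef
  have h1a : (0 : ℝ) < 1 - a := by linarith
  have hβ0 : 0 ≤ β := div_nonneg (by linarith) h1a.le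
  have hβ : β * (1 - a) = ω - 2 := div_mul_cancel₀ _ h1a.ne'
  have hexp : -(a * (ω - 2) / (1 - a)) = -(a * β) := by
    rw [hβdef]; ring
  unfold gweight
  split_ifs with h
  · -- i < n^a
    have h1 : (n : ℝ) ^ (-a) ≤ (i : ℝ)⁻¹ := by
      rw [Real.rpow_neg hn0.le]
      exact inv_anti₀ hi0 h.le
    have h2 : ((n : ℝ) ^ (-a)) ^ 2 = (n : ℝ) ^ (-a) * (n : ℝ) ^ (-a) := sq _
    rw [h2]
    calc (n : ℝ) ^ (-a) * (n : ℝ) ^ (-a) ≤ (i : ℝ)⁻¹ * (n : ℝ) ^ (-a) := by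
          exact mul_le_mul_of_nonneg_right h1 hA
      _ ≤ (i : ℝ)⁻¹ * ((n : ℝ) ^ (-a) + (n : ℝ) ^ (2 * ω - 5)) := by
          apply mul_le_mul_of_nonneg_left (by linarith) (by positivity)
  · -- n^a ≤ i
    push_neg at h
    rw [hexp]
    have hsq : ((i : ℝ) ^ (β - 1) * (n : ℝ) ^ (-(a * β))) ^ 2
        = (i : ℝ)⁻¹ * ((i : ℝ) ^ (2 * β - 1) * (n : ℝ) ^ (-(2 * (a * β)))) := by
      rw [mul_pow, ← Real.rpow_natCast ((i:ℝ) ^ (β - 1)) 2,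
        ← Real.rpow_natCast ((n:ℝ) ^ (-(a * β))) 2,
        ← Real.rpow_mul hi0.le, ← Real.rpow_mul hn0.le]
      push_cast
      rw [show (β - 1) * 2 = -1 + (2 * β - 1) by ring, Real.rpow_add hi0,
        Real.rpow_neg_one]
      ring_nf
    rw [hsq]
    apply mul_le_mul_of_nonneg_left _ (by positivity)
    rcases le_or_gt (2 * β - 1) 0 with hc | hc
    · -- small exponent case: bound by n^{-a}
      have hb1 : (i : ℝ) ^ (2 * β - 1) ≤ ((n : ℝ) ^ a) ^ (2 * β - 1) :=
        Real.rpow_le_rpow_of_nonpos (by positivity) h hc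
      have hb2 : ((n : ℝ) ^ a) ^ (2 * β - 1) = (n : ℝ) ^ (a * (2 * β - 1)) := by
        rw [← Real.rpow_mul hn0.le]
      calc (i : ℝ) ^ (2 * β - 1) * (n : ℝ) ^ (-(2 * (a * β)))
          ≤ (n : ℝ) ^ (a * (2 * β - 1)) * (n : ℝ) ^ (-(2 * (a * β))) := by
            apply mul_le_mul_of_nonneg_right _ (Real.rpow_nonneg hn0.le _)
            rw [← hb2]; exact hb1
        _ = (n : ℝ) ^ (-a) := by
            rw [← Real.rpow_add hn0]; congr 1; ring
        _ ≤ (n : ℝ) ^ (-a) + (n : ℝ) ^ (2 * ω - 5) := by linarith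
    · -- large exponent case: bound by n^{2ω-5}
      have hb1 : (i : ℝ) ^ (2 * β - 1) ≤ (n : ℝ) ^ (2 * β - 1) :=
        Real.rpow_le_rpow hi0.le (by exact_mod_cast hin) hc.le
      calc (i : ℝ) ^ (2 * β - 1) * (n : ℝ) ^ (-(2 * (a * β)))
          ≤ (n : ℝ) ^ (2 * β - 1) * (n : ℝ) ^ (-(2 * (a * β))) := by
            exact mul_le_mul_of_nonneg_right hb1 (Real.rpow_nonneg hn0.le _)
        _ = (n : ℝ) ^ (2 * ω - 5) := by
            rw [← Real.rpow_add hn0]; congr 1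
            linear_combination 2 * hβ
        _ ≤ (n : ℝ) ^ (-a) + (n : ℝ) ^ (2 * ω - 5) := by linarith

/-- `(Σ_{i=1}^n g_i²)^{1/2} ≤ C √(log n) (n^{−a/2} + n^{ω−5/2})` for a universal constant. -/
theorem gweight_l2_bound :
    ∃ C : ℝ, 0 < C ∧ ∀ (n : ℕ) (a ω : ℝ), 2 ≤ n → 0 < a → a < 1 → 2 ≤ ω → ω ≤ 3 →
      Real.sqrt (∑ i ∈ Finset.Icc 1 n, (gweight n a ω i) ^ 2) ≤
        C * Real.sqrt (Real.log n) * ((n : ℝ) ^ (-a / 2) + (n : ℝ) ^ (ω - 5 / 2)) := by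
  refine ⟨2, by norm_num, ?_⟩
  intro n a ω hn ha0 ha1 hω2 hω3
  have hn0 : (0 : ℝ) < n := by positivity
  have hn2 : (2 : ℝ) ≤ n := by exact_mod_cast hn
  have hA : 0 ≤ (n : ℝ) ^ (-a) := Real.rpow_nonneg hn0.le _
  have hB : 0 ≤ (n : ℝ) ^ (2 * ω - 5) := Real.rpow_nonneg hn0.le _
  have hlog2 : (0.6931471803 : ℝ) < Real.log 2 := Real.log_two_gt_d9
  have hlogn : Real.log 2 ≤ Real.log n := Real.log_le_log (by norm_num) hn2
  have hlogn0 : (0.5 : ℝ) < Real.log n := by linarith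
  -- step 1 : sum bound
  have hsum : (∑ i ∈ Finset.Icc 1 n, (gweight n a ω i) ^ 2)
      ≤ (∑ i ∈ Finset.Icc 1 n, (i : ℝ)⁻¹) * ((n : ℝ) ^ (-a) + (n : ℝ) ^ (2 * ω - 5)) := by
    rw [Finset.sum_mul]
    apply Finset.sum_le_sum
    intro i hi
    rw [Finset.mem_Icc] at hi
    exact gweight_sq_le n a ω hn ha0 ha1 hω2 hω3 hi.1 hi.2
  -- step 2 : harmonic bound
  have hharm : (∑ i ∈ Finset.Icc 1 n, (i : ℝ)⁻¹) ≤ 1 + Real.log n := by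
    have h1 : ((harmonic n : ℚ) : ℝ) = ∑ i ∈ Finset.Icc 1 n, (i : ℝ)⁻¹ := by
      rw [harmonic_eq_sum_Icc]; push_cast; ring
    rw [← h1]
    exact harmonic_le_one_add_log n
  have hharm3 : (∑ i ∈ Finset.Icc 1 n, (i : ℝ)⁻¹) ≤ 3 * Real.log n := by linarith
  have hS : (∑ i ∈ Finset.Icc 1 n, (gweight n a ω i) ^ 2)
      ≤ 3 * Real.log n * ((n : ℝ) ^ (-a) + (n : ℝ) ^ (2 * ω - 5)) := by
    calc (∑ i ∈ Finset.Icc 1 n, (gweight n a ω i) ^ 2)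
        ≤ (∑ i ∈ Finset.Icc 1 n, (i : ℝ)⁻¹) * ((n : ℝ) ^ (-a) + (n : ℝ) ^ (2 * ω - 5)) := hsum
      _ ≤ 3 * Real.log n * ((n : ℝ) ^ (-a) + (n : ℝ) ^ (2 * ω - 5)) := by
          exact mul_le_mul_of_nonneg_right hharm3 (by positivity)
  -- step 3 : take square roots
  have hsqrt3 : Real.sqrt 3 ≤ 2 := by
    rw [show (2 : ℝ) = Real.sqrt 4 by
      rw [show (4 : ℝ) = 2 ^ 2 by norm_num, Real.sqrt_sq (by norm_num)]]
    exact Real.sqrt_le_sqrt (by norm_num)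
  calc Real.sqrt (∑ i ∈ Finset.Icc 1 n, (gweight n a ω i) ^ 2)
      ≤ Real.sqrt (3 * Real.log n * ((n : ℝ) ^ (-a) + (n : ℝ) ^ (2 * ω - 5))) :=
        Real.sqrt_le_sqrt hS
    _ = Real.sqrt 3 * Real.sqrt (Real.log n)
          * Real.sqrt ((n : ℝ) ^ (-a) + (n : ℝ) ^ (2 * ω - 5)) := by
        rw [Real.sqrt_mul (by positivity), Real.sqrt_mul (by norm_num)]
    _ ≤ 2 * Real.sqrt (Real.log n) * ((n : ℝ) ^ (-a / 2) + (n : ℝ) ^ (ω - 5 / 2)) := by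
        have h1 : Real.sqrt ((n : ℝ) ^ (-a) + (n : ℝ) ^ (2 * ω - 5))
            ≤ (n : ℝ) ^ (-a / 2) + (n : ℝ) ^ (ω - 5 / 2) := by
          calc Real.sqrt ((n : ℝ) ^ (-a) + (n : ℝ) ^ (2 * ω - 5))
              ≤ Real.sqrt ((n : ℝ) ^ (-a)) + Real.sqrt ((n : ℝ) ^ (2 * ω - 5)) :=
                my_sqrt_add_le _ _ hA hB
            _ = (n : ℝ) ^ (-a / 2) + (n : ℝ) ^ (ω - 5 / 2) := by
                rw [my_sqrt_rpow _ _ hn0.le, my_sqrt_rpow _ _ hn0.le]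
                congr 2; ring
        have h2 : Real.sqrt 3 * Real.sqrt (Real.log n) ≤ 2 * Real.sqrt (Real.log n) :=
          mul_le_mul_of_nonneg_right hsqrt3 (Real.sqrt_nonneg _)
        exact mul_le_mul h2 h1 (Real.sqrt_nonneg _) (by positivity)
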